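/- arXiv:1601.06142 — 2 statements merged into one kernel-verified Lean document; each statement's English description precedes it below -/
import Mathlib

section
/- Let ζ ∈ C^s(ℝ^n) ∩ W^s_1(ℝ^n) be a compactly supported kernel of order k (i.e., ζ ∈ 𝒦_c^{k,s}) and let α be a multi-index with |α| < s − n. Then for every p ∈ [1, ∞] there is a constant C > 0 such that for all ε > h > 0, ‖∂^α ζ_ε‖_{p,h} ≤ C ε^{−n/q − |α|}, where 1/p + 1/q = 1. -/
open MeasureTheory ENNReal Metric Finset

noncomputable def pderiv {n : ℕ} (i : Fin n) (f : (Fin n → ℝ) → ℝ) : (Fin n → ℝ) → ℝ :=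
  fun x => fderiv ℝ f x (Pi.single i 1)

noncomputable def mderiv {n : ℕ} (α : Fin n → ℕ) (f : (Fin n → ℝ) → ℝ) : (Fin n → ℝ) → ℝ :=
  (List.finRange n).foldr (fun i g => (pderiv i)^[α i] g) f

def msize {n : ℕ} (α : Fin n → ℕ) : ℕ := ∑ i, α i

noncomputable def scaledKernel {n : ℕ} (ζ : (Fin n → ℝ) → ℝ) (ε : ℝ) : (Fin n → ℝ) → ℝ :=
  fun x => (ε ^ n)⁻¹ * ζ (ε⁻¹ • x)

def grid {n : ℕ} (h : ℝ) (i : Fin n → ℤ) : Fin n → ℝ := fun j => h * (i j : ℝ)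

def MemW {n : ℕ} (s : ℕ) (p : ℝ≥0∞) (f : (Fin n → ℝ) → ℝ) : Prop :=
  ∀ α : Fin n → ℕ, msize α ≤ s → MemLp (mderiv α f) p volume

noncomputable def sobolevSeminorm {n : ℕ} (ℓ : ℕ) (p : ℝ≥0∞) (f : (Fin n → ℝ) → ℝ) : ℝ≥0∞ :=
  ∑ α ∈ Finset.univ.filter (fun α : Fin n → Fin (ℓ + 1) => ∑ i, (α i : ℕ) = ℓ),
    eLpNorm (mderiv (fun i => (α i : ℕ)) f) p volume

noncomputable def sobolevNorm {n : ℕ} (ℓ : ℕ) (p : ℝ≥0∞) (f : (Fin n → ℝ) → ℝ) : ℝ≥0∞ :=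
  ∑ α ∈ Finset.univ.filter (fun α : Fin n → Fin (ℓ + 1) => ∑ i, (α i : ℕ) ≤ ℓ),
    eLpNorm (mderiv (fun i => (α i : ℕ)) f) p volume

noncomputable def discNorm {n : ℕ} (p : ℝ≥0∞) (h : ℝ) (g : (Fin n → ℤ) → ℝ) : ℝ≥0∞ :=
  if p = ∞ then ⨆ i, (‖g i‖₊ : ℝ≥0∞)
  else (∑' i : Fin n → ℤ, ENNReal.ofReal (h ^ n * |g i| ^ p.toReal)) ^ (1 / p.toReal)

structure IsKernelOfOrder (n k : ℕ) (ζ : (Fin n → ℝ) → ℝ) : Prop where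
  cont : Continuous ζ
  integrable : Integrable ζ
  unit_mass : ∫ x, ζ x = 1
  moments : ∀ α : Fin n → ℕ, 1 ≤ msize α → msize α ≤ k - 1 →
      ∫ x : Fin n → ℝ, (∏ i, x i ^ α i) * ζ x = 0
  absMoment : Integrable (fun x : Fin n → ℝ => ‖x‖ ^ k * |ζ x|)

noncomputable def quasiInterp {n : ℕ} (h ε : ℝ) (ζ : (Fin n → ℝ) → ℝ)
    (c : (Fin n → ℤ) → ℝ) : (Fin n → ℝ) → ℝ :=
  fun x => h ^ n * ∑' j : Fin n → ℤ, c j * scaledKernel ζ ε (x - grid h j)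



lemma pderiv_contDiff {n : ℕ} (i : Fin n) {m : ℕ} {f : (Fin n → ℝ) → ℝ}
    (hf : ContDiff ℝ ((m + 1 : ℕ) : ℕ∞) f) : ContDiff ℝ (m : ℕ∞) (pderiv i f) := by
  have hf' : ContDiff ℝ ((m : ℕ∞) + 1) f := by exact_mod_cast hf
  rw [contDiff_succ_iff_fderiv] at hf'
  exact (ContinuousLinearMap.apply ℝ ℝ (Pi.single i 1)).contDiff.comp hf'.2.2

lemma pderiv_support {n : ℕ} (i : Fin n) {f : (Fin n → ℝ) → ℝ}
    (hf : HasCompactSupport f) : HasCompactSupport (pderiv i f) :=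
  hf.fderiv_apply ℝ (Pi.single i 1)

lemma pderiv_scale {n : ℕ} (i : Fin n) {f : (Fin n → ℝ) → ℝ}
    (hf : Differentiable ℝ f) (c a : ℝ) :
    pderiv i (fun x => c * f (a • x)) = fun x => (c * a) * pderiv i f (a • x) := by
  funext x
  have hL : HasFDerivAt (fun x : Fin n → ℝ => a • x)
      (a • ContinuousLinearMap.id ℝ (Fin n → ℝ)) x :=
    (a • ContinuousLinearMap.id ℝ (Fin n → ℝ)).hasFDerivAt
  have hcomp : HasFDerivAt (fun x : Fin n → ℝ => f (a • x))
      ((fderiv ℝ f (a • x)).comp (a • ContinuousLinearMap.id ℝ (Fin n → ℝ))) x :=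
    ((hf (a • x)).hasFDerivAt).comp x hL
  have hm : HasFDerivAt (fun x : Fin n → ℝ => c * f (a • x))
      (c • ((fderiv ℝ f (a • x)).comp (a • ContinuousLinearMap.id ℝ (Fin n → ℝ)))) x :=
    hcomp.const_mul c
  show fderiv ℝ (fun x => c * f (a • x)) x (Pi.single i 1) = _
  rw [hm.fderiv]
  simp [pderiv, ContinuousLinearMap.smul_apply, _root_.map_smul]
  ring

lemma iter_contDiff {n : ℕ} (i : Fin n) : ∀ (j m : ℕ) (f : (Fin n → ℝ) → ℝ),
    ContDiff ℝ ((m + j : ℕ) : ℕ∞) f → ContDiff ℝ (m : ℕ∞) ((pderiv i)^[j] f) := by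
  intro j
  induction j with
  | zero => intro m f hf; simpa using hf
  | succ j ih =>
    intro m f hf
    rw [Function.iterate_succ_apply]
    exact ih m (pderiv i f) (pderiv_contDiff i hf)

lemma iter_support {n : ℕ} (i : Fin n) (j : ℕ) {f : (Fin n → ℝ) → ℝ}
    (hf : HasCompactSupport f) : HasCompactSupport ((pderiv i)^[j] f) := by
  induction j generalizing f with
  | zero => simpa using hf
  | succ j ih => rw [Function.iterate_succ_apply]; exact ih (pderiv_support i hf)

lemma iter_scale {n : ℕ} (i : Fin n) : ∀ (j : ℕ) (f : (Fin n → ℝ) → ℝ) (c a : ℝ),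
    ContDiff ℝ ((j : ℕ) : ℕ∞) f →
    (pderiv i)^[j] (fun x => c * f (a • x)) = fun x => (c * a ^ j) * (pderiv i)^[j] f (a • x) := by
  intro j
  induction j with
  | zero => intro f c a _; simp
  | succ j ih =>
    intro f c a hf
    rw [Function.iterate_succ_apply, Function.iterate_succ_apply]
    have hdf : Differentiable ℝ f := hf.differentiable (by simp)
    rw [pderiv_scale i hdf c a, ih (pderiv i f) (c * a) a (pderiv_contDiff i (by exact_mod_cast hf))]
    funext x
    ring

lemma foldr_contDiff {n : ℕ} (α : Fin n → ℕ) : ∀ (l : List (Fin n)) (m : ℕ) (f : (Fin n → ℝ) → ℝ),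
    ContDiff ℝ ((m + (l.map α).sum : ℕ) : ℕ∞) f →
    ContDiff ℝ (m : ℕ∞) (l.foldr (fun i g => (pderiv i)^[α i] g) f) := by
  intro l
  induction l with
  | nil => intro m f hf; simpa using hf
  | cons i l ih =>
    intro m f hf
    simp only [List.foldr_cons]
    refine iter_contDiff i (α i) m _ (ih (m + α i) f ?_)
    rw [show m + α i + (l.map α).sum = m + ((i :: l).map α).sum by
      simp only [List.map_cons, List.sum_cons]; omega]
    exact hf

lemma foldr_support {n : ℕ} (α : Fin n → ℕ) : ∀ (l : List (Fin n)) (f : (Fin n → ℝ) → ℝ),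
    HasCompactSupport f → HasCompactSupport (l.foldr (fun i g => (pderiv i)^[α i] g) f) := by
  intro l
  induction l with
  | nil => intro f hf; simpa using hf
  | cons i l ih => intro f hf; simpa only [List.foldr_cons] using iter_support i (α i) (ih f hf)

lemma foldr_scale {n : ℕ} (α : Fin n → ℕ) : ∀ (l : List (Fin n)) (f : (Fin n → ℝ) → ℝ) (c a : ℝ),
    ContDiff ℝ (((l.map α).sum : ℕ) : ℕ∞) f →
    l.foldr (fun i g => (pderiv i)^[α i] g) (fun x => c * f (a • x)) =
      fun x => (c * a ^ (l.map α).sum) * l.foldr (fun i g => (pderiv i)^[α i] g) f (a • x) := by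
  intro l
  induction l with
  | nil => intro f c a _; simp
  | cons i l ih =>
    intro f c a hf
    simp only [List.foldr_cons, List.map_cons, List.sum_cons]
    have hsum : ContDiff ℝ (((l.map α).sum : ℕ) : ℕ∞) f :=
      hf.of_le (by exact_mod_cast Nat.cast_le.mpr (Nat.le_add_left _ _))
    rw [ih f c a hsum]
    have hfold : ContDiff ℝ ((α i : ℕ) : ℕ∞) (l.foldr (fun i g => (pderiv i)^[α i] g) f) :=
      foldr_contDiff α l (α i) f (by
        rw [show (α i + (l.map α).sum : ℕ) = ((i :: l).map α).sum by
          simp only [List.map_cons, List.sum_cons]]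
        exact hf)
    rw [iter_scale i (α i) _ (c * a ^ (l.map α).sum) a hfold]
    funext x
    rw [pow_add]
    ring

lemma msize_eq {n : ℕ} (α : Fin n → ℕ) : msize α = ((List.finRange n).map α).sum := by
  rw [msize, Fin.sum_univ_def]

lemma mderiv_continuous {n : ℕ} (α : Fin n → ℕ) {f : (Fin n → ℝ) → ℝ}
    (hf : ContDiff ℝ ((msize α : ℕ) : ℕ∞) f) : Continuous (mderiv α f) := by
  have := foldr_contDiff α (List.finRange n) 0 f (by rw [← msize_eq]; simpa using hf)
  exact this.continuous

lemma mderiv_support {n : ℕ} (α : Fin n → ℕ) {f : (Fin n → ℝ) → ℝ}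
    (hf : HasCompactSupport f) : HasCompactSupport (mderiv α f) :=
  foldr_support α (List.finRange n) f hf

lemma mderiv_scale {n : ℕ} (α : Fin n → ℕ) {f : (Fin n → ℝ) → ℝ} (c a : ℝ)
    (hf : ContDiff ℝ ((msize α : ℕ) : ℕ∞) f) :
    mderiv α (fun x => c * f (a • x)) = fun x => (c * a ^ msize α) * mderiv α f (a • x) := by
  rw [mderiv, mderiv, msize_eq]
  exact foldr_scale α (List.finRange n) f c a (by rw [← msize_eq]; exact hf)

theorem stmt4 {n : ℕ} (k s : ℕ) (ζ : (Fin n → ℝ) → ℝ)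
    (hker : IsKernelOfOrder n k ζ) (hζs : ContDiff ℝ (s : ℕ∞) ζ)
    (hζW : MemW s 1 ζ) (hζc : HasCompactSupport ζ)
    (α : Fin n → ℕ) (hα : msize α + n < s) :
    ∀ p q : ℝ≥0∞, 1 ≤ p → 1 / p + 1 / q = 1 →
      ∃ C > (0 : ℝ), ∀ ε h : ℝ, 0 < h → h < ε →
        discNorm p h (fun i => mderiv α (scaledKernel ζ ε) (grid h i))
          ≤ ENNReal.ofReal (C * ε ^ (-((n : ℝ) / q.toReal) - (msize α : ℝ))) := by
  intro p q hp hpq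
  have hSle : ((msize α : ℕ) : ℕ∞) ≤ ((s : ℕ) : ℕ∞) := by exact_mod_cast Nat.le_of_lt (by omega)
  have hζS : ContDiff ℝ ((msize α : ℕ) : ℕ∞) ζ := hζs.of_le (by exact_mod_cast hSle)
  set g := mderiv α ζ with hgdef
  have hgc : Continuous g := mderiv_continuous α hζS
  have hgs : HasCompactSupport g := mderiv_support α hζc
  obtain ⟨M₀, hM₀⟩ := hgc.bounded_above_of_compact_support hgs
  set M := max M₀ 1 with hMdef
  have hM1 : (1:ℝ) ≤ M := le_max_right _ _
  have hMpos : (0:ℝ) < M := lt_of_lt_of_le one_pos hM1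
  have hgM : ∀ x, |g x| ≤ M := fun x => le_trans (by simpa [Real.norm_eq_abs] using hM₀ x) (le_max_left _ _)
  obtain ⟨R₀, hR₀⟩ := hgs.isBounded.subset_closedBall 0
  set R := max R₀ 1 with hRdef
  have hR1 : (1:ℝ) ≤ R := le_max_right _ _
  have hRpos : (0:ℝ) < R := lt_of_lt_of_le one_pos hR1
  have hgR : ∀ x, g x ≠ 0 → ‖x‖ ≤ R := by
    intro x hx
    have hx' : x ∈ tsupport g := subset_tsupport g hx
    have := hR₀ hx'
    simp only [mem_closedBall, dist_zero_right] at this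
    exact this.trans (le_max_left _ _)
  have hkey : ∀ ε : ℝ, mderiv α (scaledKernel ζ ε)
      = fun x => ((ε ^ n)⁻¹ * ε⁻¹ ^ msize α) * g (ε⁻¹ • x) :=
    fun ε => mderiv_scale α ((ε ^ n)⁻¹) ε⁻¹ hζS
  have habs : ∀ ε : ℝ, 0 < ε → ∀ x,
      |mderiv α (scaledKernel ζ ε) x| ≤ M * ε ^ (-(n:ℝ) - (msize α : ℝ)) := by
    intro ε hε x
    rw [hkey]
    have h1 : (ε ^ n)⁻¹ * ε⁻¹ ^ msize α = ε ^ (-(n:ℝ) - (msize α : ℝ)) := by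
      rw [inv_pow, ← Real.rpow_natCast ε n, ← Real.rpow_natCast ε (msize α),
        ← Real.rpow_neg hε.le, ← Real.rpow_neg hε.le, ← Real.rpow_add hε]
      ring_nf
    have hc : (0:ℝ) < ε ^ (-(n:ℝ) - (msize α : ℝ)) := Real.rpow_pos_of_pos hε _
    calc |((ε ^ n)⁻¹ * ε⁻¹ ^ msize α) * g (ε⁻¹ • x)|
        = ε ^ (-(n:ℝ) - (msize α : ℝ)) * |g (ε⁻¹ • x)| := by
          rw [abs_mul, h1, abs_of_pos hc]
      _ ≤ ε ^ (-(n:ℝ) - (msize α : ℝ)) * M :=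
          mul_le_mul_of_nonneg_left (hgM _) hc.le
      _ = M * ε ^ (-(n:ℝ) - (msize α : ℝ)) := mul_comm _ _
  have hsupp : ∀ ε h : ℝ, 0 < h → h < ε → ∀ i : Fin n → ℤ,
      mderiv α (scaledKernel ζ ε) (grid h i) ≠ 0 → ∀ j, |(i j : ℝ)| ≤ R * ε / h := by
    intro ε h h0 hhe i hne j
    have hε : 0 < ε := h0.trans hhe
    rw [hkey] at hne
    have hg0 : g (ε⁻¹ • grid h i) ≠ 0 := by
      intro hzz
      apply hne
      show (ε ^ n)⁻¹ * ε⁻¹ ^ msize α * g (ε⁻¹ • grid h i) = 0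
      rw [hzz, mul_zero]
    have hball := hgR _ hg0
    have hcoord : |(ε⁻¹ • grid h i) j| ≤ R :=
      le_trans (by rw [← Real.norm_eq_abs]; exact norm_le_pi_norm _ j) hball
    have hval : (ε⁻¹ • grid h i) j = ε⁻¹ * (h * (i j : ℝ)) := rfl
    rw [hval, abs_mul, abs_mul, abs_of_pos (inv_pos.mpr hε), abs_of_pos h0] at hcoord
    rw [le_div_iff₀ h0]
    calc |(i j : ℝ)| * h = ε * (ε⁻¹ * (h * |(i j : ℝ)|)) := by field_simp
      _ ≤ ε * R := mul_le_mul_of_nonneg_left hcoord hε.le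
      _ = R * ε := mul_comm _ _
  by_cases hpinf : p = ∞
  · -- p = ∞, q = 1
    have hq1 : q = 1 := by
      rw [hpinf] at hpq
      simp only [one_div, ENNReal.inv_top, zero_add] at hpq
      exact ENNReal.inv_eq_one.mp hpq
    refine ⟨M, hMpos, ?_⟩
    intro ε h h0 hhe
    rw [discNorm, if_pos hpinf, hq1]
    refine iSup_le fun i => ?_
    rw [← enorm_eq_nnnorm, Real.enorm_eq_ofReal_abs]
    refine ENNReal.ofReal_le_ofReal ?_
    have := habs ε (h0.trans hhe) (grid h i)
    simpa using this
  · -- p finite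
    set p' := p.toReal with hp'def
    have hp0 : p ≠ 0 := by
      intro hz; rw [hz] at hp; simp at hp
    have hp'1 : 1 ≤ p' := by
      have := ENNReal.toReal_mono hpinf hp
      simpa using this
    have hp'0 : (0:ℝ) < p' := lt_of_lt_of_le one_pos hp'1
    have hq' : (n:ℝ) / q.toReal = n - n / p' := by
      by_cases hqtop : q = ∞
      · have hp1 : p = 1 := by
          rw [hqtop] at hpq
          simp only [one_div, ENNReal.inv_top, add_zero] at hpq
          exact (ENNReal.inv_eq_one.mp hpq)
        have hp'eq : p' = 1 := by rw [hp'def, hp1]; simp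
        rw [hqtop]
        simp [hp'eq]
      · have hq0 : q ≠ 0 := by
          intro hz; rw [hz] at hpq; simp at hpq
        have h1 := congrArg ENNReal.toReal hpq
        rw [ENNReal.toReal_add (by simp [one_div, ENNReal.inv_ne_top, hp0])
          (by simp [one_div, ENNReal.inv_ne_top, hq0])] at h1
        simp only [one_div, ENNReal.toReal_inv, ENNReal.toReal_one] at h1
        have hq'0 : q.toReal⁻¹ = 1 - p'⁻¹ := by rw [hp'def]; linarith
        rw [div_eq_mul_inv, hq'0, div_eq_mul_inv]
        ring
    refine ⟨(2*R+1) ^ ((n:ℝ)/p') * M, by positivity, ?_⟩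
    intro ε h h0 hhe
    have hε : 0 < ε := h0.trans hhe
    rw [discNorm, if_neg hpinf]
    set N : ℤ := ⌊R * ε / h⌋ with hNdef
    have hRε : (0:ℝ) < R * ε / h := by positivity
    have hN0 : 0 ≤ N := Int.floor_nonneg.mpr hRε.le
    set T : Finset (Fin n → ℤ) := Fintype.piFinset (fun _ => Finset.Icc (-N) N) with hTdef
    set A := ε ^ (-(n:ℝ) - (msize α : ℝ)) with hAdef
    have hA : (0:ℝ) < A := Real.rpow_pos_of_pos hε _
    have hzero : ∀ i : (Fin n → ℤ), i ∉ T →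
        ENNReal.ofReal (h ^ n * |mderiv α (scaledKernel ζ ε) (grid h i)| ^ p') = 0 := by
      intro i hi
      have hz : mderiv α (scaledKernel ζ ε) (grid h i) = 0 := by
        by_contra hne
        apply hi
        rw [hTdef, Fintype.mem_piFinset]
        intro j
        rw [Finset.mem_Icc]
        have hb := hsupp ε h h0 hhe i hne j
        obtain ⟨hb1, hb2⟩ := abs_le.mp hb
        constructor
        · rw [neg_le]
          exact Int.le_floor.mpr (by push_cast; linarith)
        · exact Int.le_floor.mpr (by push_cast; linarith)
      rw [hz]
      simp [Real.zero_rpow (ne_of_gt hp'0)]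
    rw [tsum_eq_sum hzero]
    have hterm : ∀ i ∈ T,
        ENNReal.ofReal (h ^ n * |mderiv α (scaledKernel ζ ε) (grid h i)| ^ p')
          ≤ ENNReal.ofReal (h ^ n * (M * A) ^ p') := by
      intro i _
      refine ENNReal.ofReal_le_ofReal ?_
      refine mul_le_mul_of_nonneg_left ?_ (by positivity)
      exact Real.rpow_le_rpow (abs_nonneg _) (habs ε hε (grid h i)) hp'0.le
    have hcard : (T.card : ℝ) ≤ ((2*R+1) * ε / h) ^ n := by
      have hTcard : T.card = ((2*N+1).toNat) ^ n := by
        rw [hTdef, Fintype.card_piFinset]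
        simp [Int.card_Icc]
        congr 1
        omega
      have hb : (((2*N+1).toNat : ℕ) : ℝ) ≤ (2*R+1) * ε / h := by
        rw [show (((2*N+1).toNat : ℕ) : ℝ) = ((2*N+1 : ℤ) : ℝ) by
          exact_mod_cast congrArg (fun z : ℤ => (z : ℝ)) (Int.toNat_of_nonneg (by omega))]
        push_cast
        have hfl : (N : ℝ) ≤ R * ε / h := Int.floor_le _
        have h1ε : (1:ℝ) ≤ ε / h := (one_le_div h0).mpr hhe.le
        have he2 : (2*R+1) * ε / h = 2 * (R * ε / h) + ε / h := by ring
        rw [he2]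
        linarith
      rw [hTcard]
      calc ((((2*N+1).toNat) ^ n : ℕ) : ℝ) = (((2*N+1).toNat : ℕ) : ℝ) ^ n := by push_cast; ring
        _ ≤ ((2*R+1) * ε / h) ^ n := pow_le_pow_left₀ (by positivity) hb n
    have hsum : ∑ i ∈ T, ENNReal.ofReal (h ^ n * |mderiv α (scaledKernel ζ ε) (grid h i)| ^ p')
        ≤ ENNReal.ofReal (((2*R+1) * ε / h) ^ n * (h ^ n * (M * A) ^ p')) := by
      calc ∑ i ∈ T, ENNReal.ofReal (h ^ n * |mderiv α (scaledKernel ζ ε) (grid h i)| ^ p')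
          ≤ T.card • ENNReal.ofReal (h ^ n * (M * A) ^ p') :=
            Finset.sum_le_card_nsmul T _ _ hterm
        _ = (T.card : ℝ≥0∞) * ENNReal.ofReal (h ^ n * (M * A) ^ p') := nsmul_eq_mul _ _
        _ ≤ ENNReal.ofReal (((2*R+1) * ε / h) ^ n * (h ^ n * (M * A) ^ p')) := by
            rw [← ENNReal.ofReal_natCast T.card, ← ENNReal.ofReal_mul (Nat.cast_nonneg _)]
            exact ENNReal.ofReal_le_ofReal
              (mul_le_mul_of_nonneg_right hcard (by positivity))
    set B : ℝ := ((2*R+1) * ε) ^ n * (M * A) ^ p' with hBdef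
    have hBeq : ((2*R+1) * ε / h) ^ n * (h ^ n * (M * A) ^ p') = B := by
      rw [hBdef, ← mul_assoc, ← mul_pow, div_mul_cancel₀ _ (ne_of_gt h0)]
    rw [hBeq] at hsum
    have hBpos : (0:ℝ) < B := by positivity
    calc (∑ i ∈ T, ENNReal.ofReal (h ^ n * |mderiv α (scaledKernel ζ ε) (grid h i)| ^ p')) ^ (1/p')
        ≤ (ENNReal.ofReal B) ^ (1/p') := ENNReal.rpow_le_rpow hsum (by positivity)
      _ = ENNReal.ofReal (B ^ (1/p')) := ENNReal.ofReal_rpow_of_nonneg hBpos.le (by positivity)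
      _ ≤ ENNReal.ofReal ((2*R+1) ^ ((n:ℝ)/p') * M * ε ^ (-((n:ℝ) / q.toReal) - (msize α : ℝ))) := by
          refine ENNReal.ofReal_le_ofReal (le_of_eq ?_)
          have e1 : B ^ (1/p') = ((2*R+1) * ε) ^ ((n:ℝ)/p') * (M * A) := by
            rw [hBdef, Real.mul_rpow (by positivity) (by positivity),
              ← Real.rpow_natCast ((2*R+1) * ε) n, ← Real.rpow_mul (by positivity),
              ← Real.rpow_mul (by positivity)]
            rw [mul_one_div, mul_one_div, div_self (ne_of_gt hp'0), Real.rpow_one]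
          rw [e1, Real.mul_rpow (by positivity) hε.le, hAdef]
          have e2 : ε ^ ((n:ℝ)/p') * (M * ε ^ (-(n:ℝ) - (msize α : ℝ)))
              = M * ε ^ ((n:ℝ)/p' + (-(n:ℝ) - (msize α : ℝ))) := by
            rw [Real.rpow_add hε]; ring
          have e3 : (n:ℝ)/p' + (-(n:ℝ) - (msize α : ℝ)) = -((n:ℝ) / q.toReal) - (msize α : ℝ) := by
            rw [hq']; ring
          calc (2*R+1) ^ ((n:ℝ)/p') * ε ^ ((n:ℝ)/p') * (M * ε ^ (-(n:ℝ) - (msize α : ℝ)))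
              = (2*R+1) ^ ((n:ℝ)/p') * (ε ^ ((n:ℝ)/p') * (M * ε ^ (-(n:ℝ) - (msize α : ℝ)))) := by ring
            _ = (2*R+1) ^ ((n:ℝ)/p') * (M * ε ^ (-((n:ℝ) / q.toReal) - (msize α : ℝ))) := by
                rw [e2, e3]
            _ = (2*R+1) ^ ((n:ℝ)/p') * M * ε ^ (-((n:ℝ) / q.toReal) - (msize α : ℝ)) := by ring
end

section
/- Stability bound via antisymmetry: let e = (e_i) be a finitely supported real sequence, let Δ_{ij} ∈ ℝ^n with Δ_{ij} = −Δ_{ji}, and let w_{ij} ≥ 0 be symmetric weights (w_{ij} = w_{ji}). If Λ ⊂ ℤ^n × ℤ^n contains exactly one of (i,j), (j,i) for each pair i ≠ j, then |h^{2n} Σ_{(i,j)∈Λ} e_i e_j Δ_{ij} · w_{ij} n_{ij}| ≤ ‖e‖²_{2,h} · max_i h^n Σ_j |Δ_{ij}| w_{ij}, where n_{ij} are unit vectors and ‖e‖²_{2,h} = h^n Σ_i e_i². -/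
open MeasureTheory ENNReal Metric Finset

theorem stmt13 {n : ℕ} (h : ℝ) (hh : 0 < h)
    (e : (Fin n → ℤ) → ℝ) (he : (Function.support e).Finite)
    (Δ : (Fin n → ℤ) → (Fin n → ℤ) → EuclideanSpace ℝ (Fin n))
    (hΔ : ∀ i j, Δ i j = -Δ j i)
    (w : (Fin n → ℤ) → (Fin n → ℤ) → ℝ)
    (hw0 : ∀ i j, 0 ≤ w i j) (hws : ∀ i j, w i j = w j i)
    (N : (Fin n → ℤ) → (Fin n → ℤ) → EuclideanSpace ℝ (Fin n))
    (hN : ∀ i j, ‖N i j‖ = 1)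
    (Λ : Set ((Fin n → ℤ) × (Fin n → ℤ)))
    (hΛ : ∀ i j, i ≠ j → Xor' ((i, j) ∈ Λ) ((j, i) ∈ Λ))
    (hsum : ∀ i, Summable fun j => ‖Δ i j‖ * w i j)
    (M : ℝ) (hM : ∀ i, h ^ n * ∑' j, ‖Δ i j‖ * w i j ≤ M) :
    |h ^ (2 * n) * ∑' p : Λ, e p.1.1 * e p.1.2 *
        (w p.1.1 p.1.2 * (inner ℝ (Δ p.1.1 p.1.2) (N p.1.1 p.1.2) : ℝ))|
      ≤ (h ^ n * ∑' i, (e i) ^ 2) * M := by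
  classical
  set a : (Fin n → ℤ) → (Fin n → ℤ) → ℝ := fun i j => ‖Δ i j‖ * w i j with ha
  have hΔs : ∀ i j : (Fin n → ℤ), Δ j i = -Δ i j := fun i j => hΔ j i
  have hΔd : ∀ i : (Fin n → ℤ), Δ i i = 0 := by
    intro i
    have h2 : Δ i i + Δ i i = 0 := by nth_rewrite 1 [hΔ i i]; abel
    have h3 : (2 : ℝ) • Δ i i = 0 := by rw [two_smul]; exact h2
    simpa using h3
  have ha0 : ∀ i j, 0 ≤ a i j := fun i j => mul_nonneg (norm_nonneg _) (hw0 i j)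
  have hasymm : ∀ i j, a j i = a i j := by
    intro i j
    simp only [ha]
    rw [hΔs i j, norm_neg, ← hws i j]
  set f : (Fin n → ℤ) × (Fin n → ℤ) → ℝ := fun p =>
    e p.1 * e p.2 * (w p.1 p.2 * (inner ℝ (Δ p.1 p.2) (N p.1 p.2) : ℝ)) with hf
  have hfb : ∀ p : (Fin n → ℤ) × (Fin n → ℤ),
      |f p| ≤ 2⁻¹ * (e p.1 ^ 2 + e p.2 ^ 2) * a p.1 p.2 := by
    intro p
    have h1 : |(inner ℝ (Δ p.1 p.2) (N p.1 p.2) : ℝ)| ≤ ‖Δ p.1 p.2‖ := by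
      calc |(inner ℝ (Δ p.1 p.2) (N p.1 p.2) : ℝ)| ≤ ‖Δ p.1 p.2‖ * ‖N p.1 p.2‖ :=
            abs_real_inner_le_norm _ _
        _ = ‖Δ p.1 p.2‖ := by rw [hN]; ring
    have h2 : |f p| ≤ |e p.1| * |e p.2| * a p.1 p.2 := by
      simp only [hf, abs_mul]
      rw [abs_of_nonneg (hw0 p.1 p.2)]
      have h3 : w p.1 p.2 * |(inner ℝ (Δ p.1 p.2) (N p.1 p.2) : ℝ)| ≤ a p.1 p.2 := by
        simp only [ha]
        nlinarith [hw0 p.1 p.2, norm_nonneg (Δ p.1 p.2), abs_nonneg ((inner ℝ (Δ p.1 p.2) (N p.1 p.2) : ℝ))]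
      exact mul_le_mul_of_nonneg_left h3 (mul_nonneg (abs_nonneg _) (abs_nonneg _))
    have h4 : |e p.1| * |e p.2| ≤ 2⁻¹ * (e p.1 ^ 2 + e p.2 ^ 2) := by
      nlinarith [sq_nonneg (|e p.1| - |e p.2|), sq_abs (e p.1), sq_abs (e p.2)]
    calc |f p| ≤ |e p.1| * |e p.2| * a p.1 p.2 := h2
      _ ≤ 2⁻¹ * (e p.1 ^ 2 + e p.2 ^ 2) * a p.1 p.2 :=
          mul_le_mul_of_nonneg_right h4 (ha0 p.1 p.2)
  set S : Finset (Fin n → ℤ) := he.toFinset with hSdef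
  set g : Λ → ℝ := fun p => f p.1 with hg
  have hgsupp : Function.support g ⊆
      Subtype.val ⁻¹' ((Function.support e) ×ˢ (Function.support e)) := by
    intro p hp
    simp only [Function.mem_support, hg, hf] at hp
    simp only [Set.mem_preimage, Set.mem_prod, Function.mem_support]
    constructor
    · intro h0; apply hp; rw [h0]; ring
    · intro h0; apply hp; rw [h0]; ring
  have hgfin : (Function.support g).Finite :=
    Set.Finite.subset ((he.prod he).preimage (Subtype.val_injective.injOn)) hgsupp
  set s : Finset Λ := hgfin.toFinset with hsdef
  have htsum : ∑' p : Λ, g p = ∑ p ∈ s, g p := by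
    apply tsum_eq_sum
    intro p hp
    by_contra h0
    exact hp (hgfin.mem_toFinset.mpr h0)
  set T : Finset ((Fin n → ℤ) × (Fin n → ℤ)) :=
    (S ×ˢ S).filter (fun p => p ∈ Λ ∧ p.1 ≠ p.2) with hTdef
  have himg : s.image Subtype.val ⊆ T := by
    intro p hp
    obtain ⟨q, hq, rfl⟩ := Finset.mem_image.mp hp
    have hq2 : g q ≠ 0 := hgfin.mem_toFinset.mp hq
    simp only [hg, hf] at hq2
    simp only [hTdef, Finset.mem_filter, Finset.mem_product]
    refine ⟨⟨?_, ?_⟩, q.2, ?_⟩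
    · rw [hSdef, Set.Finite.mem_toFinset]
      intro h0; apply hq2; rw [h0]; ring
    · rw [hSdef, Set.Finite.mem_toFinset]
      intro h0; apply hq2; rw [h0]; ring
    · intro h0
      apply hq2
      have : Δ (q.1).1 (q.1).2 = 0 := by rw [h0]; exact hΔd _
      rw [this]
      simp
  have step1 : |∑' p : Λ, g p| ≤ ∑ p ∈ T, |f p| := by
    rw [htsum]
    calc |∑ p ∈ s, g p| ≤ ∑ p ∈ s, |g p| := Finset.abs_sum_le_sum_abs _ _
      _ = ∑ p ∈ s.image Subtype.val, |f p| := by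
          rw [Finset.sum_image (fun x _ y _ hxy => Subtype.val_injective hxy)]
      _ ≤ ∑ p ∈ T, |f p| :=
          Finset.sum_le_sum_of_subset_of_nonneg himg (fun p _ _ => abs_nonneg _)
  have step2 : ∑ p ∈ T, |f p| ≤
      2⁻¹ * (∑ p ∈ T, e p.1 ^ 2 * a p.1 p.2 + ∑ p ∈ T, e p.2 ^ 2 * a p.1 p.2) := by
    rw [← Finset.sum_add_distrib, Finset.mul_sum]
    apply Finset.sum_le_sum
    intro p _
    calc |f p| ≤ 2⁻¹ * (e p.1 ^ 2 + e p.2 ^ 2) * a p.1 p.2 := hfb p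
      _ = 2⁻¹ * (e p.1 ^ 2 * a p.1 p.2 + e p.2 ^ 2 * a p.1 p.2) := by ring
  -- swap the second sum
  have hswap : ∑ p ∈ T, e p.2 ^ 2 * a p.1 p.2 =
      ∑ p ∈ T.image Prod.swap, e p.1 ^ 2 * a p.1 p.2 := by
    rw [Finset.sum_image (fun x _ y _ hxy => Prod.swap_injective hxy)]
    apply Finset.sum_congr rfl
    intro p _
    simp only [Prod.fst_swap, Prod.snd_swap]
    rw [hasymm]
  have hdisj : Disjoint T (T.image Prod.swap) := by
    rw [Finset.disjoint_left]
    intro p hp hp2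
    obtain ⟨q, hq, hqp⟩ := Finset.mem_image.mp hp2
    simp only [hTdef, Finset.mem_filter] at hp hq
    obtain ⟨-, hpΛ, hpne⟩ := hp
    obtain ⟨-, hqΛ, -⟩ := hq
    have hqs : (p.2, p.1) ∈ Λ := by
      have : q = (p.2, p.1) := by
        rw [← hqp]; simp [Prod.ext_iff]
      rwa [this] at hqΛ
    have hxor := hΛ p.1 p.2 hpne
    rcases hxor with ⟨h1, h2⟩ | ⟨h1, h2⟩
    · exact h2 hqs
    · exact h2 hpΛ
  have hsub : T ∪ T.image Prod.swap ⊆ S ×ˢ S := by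
    apply Finset.union_subset
    · intro p hp
      simp only [hTdef, Finset.mem_filter] at hp
      exact hp.1
    · intro p hp
      obtain ⟨q, hq, hqp⟩ := Finset.mem_image.mp hp
      simp only [hTdef, Finset.mem_filter, Finset.mem_product] at hq ⊢
      rw [← hqp]
      exact ⟨hq.1.2, hq.1.1⟩
  have step3 : ∑ p ∈ T, e p.1 ^ 2 * a p.1 p.2 + ∑ p ∈ T, e p.2 ^ 2 * a p.1 p.2
      ≤ ∑ p ∈ S ×ˢ S, e p.1 ^ 2 * a p.1 p.2 := by
    rw [hswap, ← Finset.sum_union hdisj]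
    apply Finset.sum_le_sum_of_subset_of_nonneg hsub
    intro p _ _
    exact mul_nonneg (sq_nonneg _) (ha0 _ _)
  have step4 : ∑ p ∈ S ×ˢ S, e p.1 ^ 2 * a p.1 p.2 =
      ∑ i ∈ S, e i ^ 2 * ∑ j ∈ S, a i j := by
    rw [Finset.sum_product]
    apply Finset.sum_congr rfl
    intro i _
    rw [Finset.mul_sum]
  have hMbd : ∀ i, h ^ n * ∑ j ∈ S, a i j ≤ M := by
    intro i
    refine le_trans ?_ (hM i)
    apply mul_le_mul_of_nonneg_left _ (le_of_lt (pow_pos hh n))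
    exact Summable.sum_le_tsum S (fun j _ => ha0 i j) (hsum i)
  have hesum : ∑' i, (e i) ^ 2 = ∑ i ∈ S, e i ^ 2 := by
    apply tsum_eq_sum
    intro i hi
    have : e i = 0 := by
      by_contra h0
      exact hi (he.mem_toFinset.mpr h0)
    rw [this]; ring
  have hhn : (0:ℝ) ≤ h ^ n := le_of_lt (pow_pos hh n)
  have hpow : h ^ (2 * n) = h ^ n * h ^ n := by rw [two_mul, pow_add]
  have key : h ^ (2 * n) * ∑ p ∈ S ×ˢ S, e p.1 ^ 2 * a p.1 p.2
      ≤ (h ^ n * ∑' i, (e i) ^ 2) * M := by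
    rw [step4, hesum, hpow, Finset.mul_sum, Finset.mul_sum, Finset.sum_mul]
    apply Finset.sum_le_sum
    intro i _
    have h1 : h ^ n * h ^ n * (e i ^ 2 * ∑ j ∈ S, a i j)
        = (h ^ n * e i ^ 2) * (h ^ n * ∑ j ∈ S, a i j) := by ring
    rw [h1]
    exact mul_le_mul_of_nonneg_left (hMbd i) (mul_nonneg hhn (sq_nonneg _))
  have hTnn : 0 ≤ ∑ p ∈ T, |f p| := Finset.sum_nonneg (fun p _ => abs_nonneg _)
  have hSSnn : 0 ≤ ∑ p ∈ S ×ˢ S, e p.1 ^ 2 * a p.1 p.2 :=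
    Finset.sum_nonneg (fun p _ => mul_nonneg (sq_nonneg _) (ha0 _ _))
  have hhalf : ∑ p ∈ T, |f p| ≤ ∑ p ∈ S ×ˢ S, e p.1 ^ 2 * a p.1 p.2 := by
    refine le_trans step2 ?_
    have := step3
    nlinarith [hSSnn]
  calc |h ^ (2 * n) * ∑' p : Λ, e p.1.1 * e p.1.2 *
        (w p.1.1 p.1.2 * (inner ℝ (Δ p.1.1 p.1.2) (N p.1.1 p.1.2) : ℝ))|
      = h ^ (2 * n) * |∑' p : Λ, g p| := by
        rw [abs_mul, abs_of_nonneg (le_of_lt (pow_pos hh (2 * n)))]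
    _ ≤ h ^ (2 * n) * ∑ p ∈ S ×ˢ S, e p.1 ^ 2 * a p.1 p.2 := by
        apply mul_le_mul_of_nonneg_left (le_trans step1 hhalf)
          (le_of_lt (pow_pos hh (2 * n)))
    _ ≤ (h ^ n * ∑' i, (e i) ^ 2) * M := key
end
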